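/- Let A be a commutative distributive ring (arithmetical ring) with a completely prime nil ideal P. Then P = xP for every non-zero-divisor x of A. -/

import Mathlib

open MulOpposite

/-- Deviation (Gabriel–Rentschler Krull dimension) of a preorder is `≤ α`:
in every strictly descending chain, all but finitely many of the
intervals (corresponding to successive factor modules) have deviation `< α`. -/
def DevLE (α : Ordinal.{0}) (P : Type) (inst : Preorder P) : Prop :=
  ∀ f : ℕ → P, (∀ n : ℕ, inst.lt (f (n + 1)) (f n)) →
    ∃ N : ℕ, ∀ n : ℕ, N ≤ n → ∃ β : Ordinal.{0}, ∃ _ : β < α,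
      DevLE β {x : P // inst.le (f (n + 1)) x ∧ inst.le x (f n)}
        (@Subtype.preorder P inst fun x => inst.le (f (n + 1)) x ∧ inst.le x (f n))
termination_by α

/-- A preorder has Krull dimension (deviation) if its deviation exists as an ordinal. -/
def HasKdimO (P : Type) [inst : Preorder P] : Prop := ∃ α : Ordinal.{0}, DevLE α P inst

/-- A module has Gabriel–Rentschler Krull dimension: the deviation of its submodule
lattice exists (intervals of this lattice are the submodule lattices of the
subquotients, so this agrees with the transfinite definition via factor modules). -/
def ModHasKdim (R M : Type) [Ring R] [AddCommGroup M] [Module R M] : Prop :=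
  HasKdimO (Submodule R M)

/-- A complete lattice (of submodules/ideals) is finite-dimensional: it contains no
infinite independent family (direct sum) of nonzero elements. -/
def FinDimL (L : Type) [CompleteLattice L] : Prop :=
  ¬ ∃ f : ℕ → L, (∀ n, f n ≠ ⊥) ∧ ∀ n, f n ⊓ (⨆ m, ⨆ _ : m ≠ n, f m) = ⊥

/-- A commutative ring is arithmetical if its lattice of ideals is distributive. -/
def Arithmetical (A : Type) [CommRing A] : Prop :=
  ∀ I J K : Ideal A, I ⊓ (J ⊔ K) = I ⊓ J ⊔ I ⊓ K

theorem stmt4 (A : Type) [CommRing A] (ha : Arithmetical A)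
    (P : Ideal A) (hP : P.IsPrime) (hnil : ∀ p ∈ P, IsNilpotent p)
    (x : A) (hx : ∀ a : A, x * a = 0 → a = 0) :
    P = Ideal.span {x} * P := by
  -- First, x ∉ P, otherwise the ring is trivial.
  by_cases hxP : x ∈ P
  · -- x is nilpotent, hence 1 = 0 since x is a non-zero-divisor
    obtain ⟨n, hn⟩ := hnil x hxP
    have h1 : (1 : A) = 0 := by
      induction n with
      | zero => simpa using hn
      | succ k ih =>
        apply ih
        apply hx
        rw [← pow_succ']
        exact hn
    ext a
    have ha0 : a = 0 := by
      calc a = 1 * a := (one_mul a).symm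
        _ = 0 := by rw [h1, zero_mul]
    simp [ha0]
  · refine le_antisymm ?_ (Ideal.mul_le_right.trans ?_)
    swap
    · intro y hy
      exact hy
    intro p hp
    -- Jensen's trick: decompose span{x+p} via distributivity
    set a := x with ha'
    set b := p with hb'
    have hmem : a + b ∈ Ideal.span {a + b} ⊓ (Ideal.span {a} ⊔ Ideal.span {b}) := by
      constructor
      · exact Ideal.mem_span_singleton_self _
      · exact Submodule.add_mem_sup (Ideal.mem_span_singleton_self a)
          (Ideal.mem_span_singleton_self b)
    rw [ha _ _ _] at hmem
    obtain ⟨u, hu, v, hv, huv⟩ := Submodule.mem_sup.mp hmem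
    obtain ⟨hu1, hu2⟩ := hu
    obtain ⟨hv1, hv2⟩ := hv
    obtain ⟨c, hc⟩ := Ideal.mem_span_singleton'.mp hu1
    obtain ⟨d, hd⟩ := Ideal.mem_span_singleton'.mp hv1
    -- d * x ∈ span {p}
    have hdx : d * a ∈ Ideal.span {b} := by
      have : d * a = v - d * b := by rw [← hd]; ring
      rw [this]
      exact Submodule.sub_mem _ hv2 (Ideal.mul_mem_left _ d (Ideal.mem_span_singleton_self b))
    -- (1 - d) * p ∈ span {x}
    have hw : (1 - c - d) * (a + b) = 0 := by
      have : (c + d) * (a + b) = a + b := by rw [add_mul, hc, hd, huv]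
      linear_combination -this
    have h1dp : (1 - d) * b ∈ Ideal.span {a} := by
      have key : (1 - d) * b = (u - c * a) + (-((1 - c - d) * a)) := by
        have hwb : (1 - c - d) * b = -((1 - c - d) * a) := by linear_combination hw
        calc (1 - d) * b = c * b + (1 - c - d) * b := by ring
          _ = (u - c * a) + (-((1 - c - d) * a)) := by
              rw [hwb, ← hc]; ring
      rw [key]
      exact Submodule.add_mem _
        (Submodule.sub_mem _ hu2 (Ideal.mul_mem_left _ c (Ideal.mem_span_singleton_self a)))
        (Submodule.neg_mem _ (Ideal.mul_mem_left _ _ (Ideal.mem_span_singleton_self a)))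
    -- d ∈ P since d * x ∈ span{p} ≤ P and x ∉ P
    have hdP : d ∈ P := by
      have hspanP : Ideal.span {b} ≤ P := (Ideal.span_singleton_le_iff_mem P).mpr hp
      have : d * a ∈ P := hspanP hdx
      rcases hP.mem_or_mem this with h | h
      · exact h
      · exact absurd h hxP
    -- 1 - d is a unit since d is nilpotent
    have hdnil : IsNilpotent d := hnil d hdP
    have hunit : IsUnit (1 - d) := by
      have := hdnil.isUnit_one_sub
      exact this
    -- (1 - d) * p = x * q for some q ∈ P
    obtain ⟨q, hq⟩ := Ideal.mem_span_singleton'.mp h1dp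
    have hqP : q ∈ P := by
      have : q * a ∈ P := by
        rw [hq]
        exact Ideal.mul_mem_left _ _ hp
      rcases hP.mem_or_mem this with h | h
      · exact h
      · exact absurd h hxP
    obtain ⟨e, he⟩ := hunit.exists_left_inv
    have hpeq : b = a * (e * q) := by
      calc b = (e * (1 - d)) * b := by rw [he, one_mul]
        _ = e * ((1 - d) * b) := by ring
        _ = e * (q * a) := by rw [← hq]
        _ = a * (e * q) := by ring
    rw [hpeq]
    exact Ideal.mul_mem_mul (Ideal.mem_span_singleton_self a) (Ideal.mul_mem_left _ e hqP)
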